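/- Let G be a connected graph on at least 2 vertices. If some vertex u of G satisfies γ_R(G − u) ≥ γ_R(G), then the Roman bondage number satisfies b_R(G) ≤ d(u) − γ_R(G − u) + γ_R(G) ≤ Δ(G), where Δ(G) is the maximum degree. -/

import Mathlib

/-- A Roman dominating function on `G`: labels in `{0,1,2}` and every vertex
labeled `0` has a neighbor labeled `2`. -/
def IsRDF {V : Type*} (G : SimpleGraph V) (f : V → ℕ) : Prop :=
  (∀ v, f v ≤ 2) ∧ ∀ v, f v = 0 → ∃ u, G.Adj v u ∧ f u = 2

/-- The Roman domination number of `G`. -/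
noncomputable def romanDom {V : Type*} [Fintype V] (G : SimpleGraph V) : ℕ :=
  sInf {w | ∃ f, IsRDF G f ∧ ∑ v, f v = w}

/-- The Roman domination number of the vertex-deleted graph `G - v`. -/
noncomputable def romanDomDel {V : Type*} [Fintype V] [DecidableEq V]
    (G : SimpleGraph V) (v : V) : ℕ :=
  romanDom (G.induce {w | w ≠ v})

/-- The Roman bondage number of `G`. -/
noncomputable def romanBondage {V : Type*} [Fintype V] [DecidableEq V]
    (G : SimpleGraph V) : ℕ :=
  sInf {k | ∃ B : Finset (Sym2 V), ↑B ⊆ G.edgeSet ∧ B.card = k ∧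
    romanDom (G.deleteEdges ↑B) ≠ romanDom G}

lemma isRDF_one {V : Type*} (G : SimpleGraph V) : IsRDF G (fun _ => 1) :=
  ⟨fun _ => one_le_two, fun _ h => absurd h one_ne_zero⟩

lemma romanDom_exists {V : Type*} [Fintype V] (G : SimpleGraph V) :
    ∃ f, IsRDF G f ∧ ∑ v, f v = romanDom G :=
  Nat.sInf_mem (⟨∑ _v : V, (1 : ℕ), ⟨fun _ => 1, isRDF_one G, rfl⟩⟩ :
    {w | ∃ f, IsRDF G f ∧ ∑ v, f v = w}.Nonempty)

lemma romanDom_le {V : Type*} [Fintype V] (G : SimpleGraph V) {f : V → ℕ}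
    (hf : IsRDF G f) : romanDom G ≤ ∑ v, f v :=
  Nat.sInf_le ⟨f, hf, rfl⟩

lemma sum_subtype_ne {V : Type*} [Fintype V] [DecidableEq V] (u : V) (f : V → ℕ) :
    ∑ v : ({w | w ≠ u} : Set V), f v.1 = ∑ v ∈ Finset.univ.erase u, f v := by
  rw [← Finset.filter_ne' Finset.univ u]
  exact (Finset.sum_subtype _ (by simp) f).symm

/-- `γ_R(G-u) ≤ γ_R(G) + d(u)`. -/
lemma romanDomDel_le {V : Type*} [Fintype V] [DecidableEq V] (G : SimpleGraph V)
    [DecidableRel G.Adj] (u : V) :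
    romanDomDel G u ≤ romanDom G + G.degree u := by
  obtain ⟨f, hf, hsum⟩ := romanDom_exists G
  set g : ({w | w ≠ u} : Set V) → ℕ :=
    fun v => if G.Adj u v.1 then max (f v.1) 1 else f v.1 with hg
  have hrdf : IsRDF (G.induce {w | w ≠ u}) g := by
    constructor
    · intro v
      have hfv := hf.1 v.1
      by_cases h : G.Adj u v.1 <;> simp [hg, h] <;> omega
    · intro v hv
      simp only [hg] at hv
      by_cases h : G.Adj u v.1
      · simp [h] at hv
      · simp only [if_neg h] at hv
        obtain ⟨z, hz, hz2⟩ := hf.2 v.1 hv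
        have hzu : z ≠ u := by rintro rfl; exact h hz.symm
        refine ⟨⟨z, hzu⟩, hz, ?_⟩
        by_cases h2 : G.Adj u z <;> simp [hg, h2, hz2]
  refine le_trans (romanDom_le _ hrdf) ?_
  have h1 : ∑ v : ({w | w ≠ u} : Set V), g v ≤
      ∑ v : ({w | w ≠ u} : Set V), (f v.1 + if G.Adj u v.1 then 1 else 0) := by
    apply Finset.sum_le_sum
    intro v _
    by_cases h : G.Adj u v.1 <;> simp [hg, h] <;> omega
  refine le_trans h1 ?_
  rw [sum_subtype_ne u (fun v => f v + if G.Adj u v then 1 else 0), Finset.sum_add_distrib]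
  have h2 : ∑ v ∈ Finset.univ.erase u, f v ≤ ∑ v, f v :=
    Finset.sum_le_sum_of_subset (Finset.erase_subset _ _)
  have h3 : ∑ v ∈ Finset.univ.erase u, (if G.Adj u v then 1 else 0) ≤ G.degree u := by
    refine le_trans (Finset.sum_le_sum_of_subset (Finset.erase_subset _ _)) ?_
    have : (∑ x : V, if G.Adj u x then (1:ℕ) else 0) = G.degree u := by
      simp [SimpleGraph.degree, SimpleGraph.neighborFinset_eq_filter, Finset.sum_boole]
    omega
  omega

/-- Key lemma: deleting a set `B` of edges incident to `u` gives
`γ_R(G-u) + 1 ≤ γ_R(G-B) + |incidence(u) \ B|`. -/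
lemma key_lemma {V : Type*} [Fintype V] [DecidableEq V] (G : SimpleGraph V)
    [DecidableRel G.Adj] (u : V) (B : Finset (Sym2 V)) (hB : B ⊆ G.incidenceFinset u) :
    romanDomDel G u + 1 ≤ romanDom (G.deleteEdges ↑B) + (G.incidenceFinset u \ B).card := by
  obtain ⟨g, hg, hsum⟩ := romanDom_exists (G.deleteEdges (↑B : Set (Sym2 V)))
  set m := romanDom (G.deleteEdges (↑B : Set (Sym2 V))) with hm
  set kk := (G.incidenceFinset u \ B).card with hkk
  -- the condition under which a vertex must be bumped
  set cond : V → Prop := fun v => g v = 0 ∧ G.Adj u v ∧ s(u, v) ∉ B ∧ g u = 2 with hcond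
  have instdec : DecidablePred cond := fun v => by
    rw [hcond]; infer_instance
  set h : ({w | w ≠ u} : Set V) → ℕ := fun v => if cond v.1 then 1 else g v.1 with hh
  have hrdf : IsRDF (G.induce {w | w ≠ u}) h := by
    constructor
    · intro v
      by_cases hc : cond v.1
      · rw [hh]; simp only [if_pos hc]; omega
      · rw [hh]; simp only [if_neg hc]; exact hg.1 v.1
    · intro v hv
      simp only [hh] at hv
      have hnc : ¬ cond v.1 := by
        intro hcv; rw [if_pos hcv] at hv; exact one_ne_zero hv
      have hg0 : g v.1 = 0 := by rwa [if_neg hnc] at hv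
      have hgv : g v.1 = 0 ∧ ¬ cond v.1 := ⟨hg0, hnc⟩
      obtain ⟨z, hz, hz2⟩ := hg.2 v.1 hgv.1
      rw [SimpleGraph.deleteEdges_adj] at hz
      have hzu : z ≠ u := by
        rintro rfl
        exact hgv.2 ⟨hgv.1, hz.1.symm, by rw [Sym2.eq_swap]; exact hz.2, hz2⟩
      refine ⟨⟨z, hzu⟩, hz.1, ?_⟩
      have : ¬ cond z := fun hc => by rw [hc.1] at hz2; omega
      simp [hh, this, hz2]
  have hdel : romanDomDel G u ≤ ∑ v : ({w | w ≠ u} : Set V), h v :=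
    romanDom_le _ hrdf
  -- bound the sum of h
  have hsplit : g u + ∑ v ∈ Finset.univ.erase u, g v = m := by
    rw [← hsum]; exact Finset.add_sum_erase _ g (Finset.mem_univ u)
  set bc := (Finset.univ.filter cond).card with hbc
  have hH : ∑ v : ({w | w ≠ u} : Set V), h v ≤
      ∑ v ∈ Finset.univ.erase u, g v + bc := by
    have e1 : ∑ v : ({w | w ≠ u} : Set V), h v ≤
        ∑ v : ({w | w ≠ u} : Set V), (g v.1 + if cond v.1 then 1 else 0) := by
      apply Finset.sum_le_sum
      intro v _
      by_cases hc : cond v.1 <;> simp [hh, hc]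
    refine le_trans e1 ?_
    rw [sum_subtype_ne u (fun v => g v + if cond v then 1 else 0), Finset.sum_add_distrib]
    have e2 : ∑ v ∈ Finset.univ.erase u, (if cond v then 1 else 0) ≤ bc := by
      refine le_trans (Finset.sum_le_sum_of_subset (Finset.erase_subset _ _)) ?_
      have : (∑ x : V, if cond x then (1:ℕ) else 0) = bc := by
        rw [hbc]; simp [Finset.sum_boole]
      omega
    omega
  -- bumped vertices inject into kept incident edges
  have hbk : bc ≤ kk := by
    rw [hbc, hkk]
    apply Finset.card_le_card_of_injOn (fun v => s(u, v))
    · intro v hv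
      rw [Finset.mem_coe, Finset.mem_filter] at hv
      obtain ⟨-, -, hadj, hnB, -⟩ := hv
      rw [Finset.mem_coe, Finset.mem_sdiff]
      exact ⟨by rw [SimpleGraph.mem_incidenceFinset]; exact ⟨hadj, Sym2.mem_mk_left u v⟩, hnB⟩
    · intro a _ b _ hab
      simpa using Sym2.congr_right.mp hab
  -- if someone is bumped then g u = 2
  have hb2 : 1 ≤ bc → g u = 2 := by
    intro hbc1
    obtain ⟨v, hv⟩ := Finset.card_pos.mp hbc1
    exact ((Finset.mem_filter.mp hv).2).2.2.2
  -- if g u = 0 then some incident edge is kept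
  have hgu0 : g u = 0 → 1 ≤ kk := by
    intro h0
    obtain ⟨z, hz, _⟩ := hg.2 u h0
    rw [SimpleGraph.deleteEdges_adj] at hz
    rw [hkk]
    apply Finset.card_pos.mpr
    refine ⟨s(u, z), Finset.mem_sdiff.mpr ⟨?_, by simpa using hz.2⟩⟩
    rw [SimpleGraph.mem_incidenceFinset]
    exact ⟨hz.1, Sym2.mem_mk_left u z⟩
  have hgu2 : g u ≤ 2 := hg.1 u
  by_cases hc1 : 1 ≤ bc
  · have := hb2 hc1; omega
  · by_cases hc2 : g u = 0
    · have := hgu0 hc2; omega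
    · omega

/-- If `G` is connected of order at least `2` and
`γ_R(G − u) ≥ γ_R(G)` for some vertex `u`, then
`b_R(G) ≤ d(u) − γ_R(G − u) + γ_R(G) ≤ Δ(G)`. -/
theorem stmt10 {V : Type*} [Fintype V] [DecidableEq V] (G : SimpleGraph V)
    [DecidableRel G.Adj] (hc : G.Connected) (hn : 2 ≤ Fintype.card V)
    (u : V) (hu : romanDom G ≤ romanDomDel G u) :
    romanBondage G ≤ G.degree u + romanDom G - romanDomDel G u ∧
      G.degree u + romanDom G - romanDomDel G u ≤ G.maxDegree := by
  have hC : romanDomDel G u ≤ romanDom G + G.degree u := romanDomDel_le G u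
  set k := romanDomDel G u - romanDom G with hk
  have hkd : k ≤ G.degree u := by omega
  have hcard : G.degree u - k ≤ (G.incidenceFinset u).card := by
    rw [SimpleGraph.card_incidenceFinset_eq_degree]; omega
  obtain ⟨B, hBsub, hBcard⟩ := Finset.exists_subset_card_eq hcard
  have hkkcard : (G.incidenceFinset u \ B).card = k := by
    rw [Finset.card_sdiff_of_subset hBsub, SimpleGraph.card_incidenceFinset_eq_degree, hBcard]; omega
  have hkey := key_lemma G u B hBsub
  rw [hkkcard] at hkey
  have hne : romanDom (G.deleteEdges ↑B) ≠ romanDom G := by omega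
  have hmem : (G.degree u - k) ∈ {n | ∃ B : Finset (Sym2 V), ↑B ⊆ G.edgeSet ∧ B.card = n ∧
      romanDom (G.deleteEdges ↑B) ≠ romanDom G} := by
    refine ⟨B, ?_, hBcard, hne⟩
    intro e he
    have hmem' := hBsub (Finset.mem_coe.mp he)
    rw [SimpleGraph.mem_incidenceFinset] at hmem'
    exact G.incidenceSet_subset u hmem'
  have hbond : romanBondage G ≤ G.degree u - k := Nat.sInf_le hmem
  have hmax := G.degree_le_maxDegree u
  constructor <;> omega
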